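/- Let F be a quadratic map of the plane whose quadratic coefficients (a₀, a₁, a₂, b₀, b₁, b₂) are not all zero, and suppose det DF(x,y) = 0 for all (x,y) ∈ ℝ². Then there exists a bijective affine map L : ℝ² → ℝ² such that L(F(ℝ²)) is exactly one of the following three model sets: the line ℝ × {0}; the ray [0, ∞) × {0}; or the parabola {(t, t²) : t ∈ ℝ}. -/

import Mathlib

/-- If the "remainder" value is on the right side, we can hit `r` by solving in `x`. -/
lemma hitQ (A B C c1 c2 c5 r y : ℝ) (hA : A ≠ 0)
    (h : 0 ≤ (r - (C*y^2 + c2*y + c5 - (B*y+c1)^2/(4*A)))/A) :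
    ∃ x, A*x^2 + B*x*y + C*y^2 + c1*x + c2*y + c5 = r := by
  set R := C*y^2 + c2*y + c5 - (B*y+c1)^2/(4*A) with hR
  refine ⟨Real.sqrt ((r - R)/A) - (B*y+c1)/(2*A), ?_⟩
  have hs : Real.sqrt ((r - R)/A) ^ 2 = (r - R)/A := Real.sq_sqrt h
  have key : ∀ s : ℝ, A*(s - (B*y+c1)/(2*A))^2 + B*(s - (B*y+c1)/(2*A))*y + C*y^2
      + c1*(s - (B*y+c1)/(2*A)) + c2*y + c5 = A*s^2 + R := by
    intro s; rw [hR]; field_simp; ring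
  rw [key, hs]
  field_simp
  ring

lemma exists_big (α β ρ : ℝ) (hα : 0 < α) : ∃ y, 0 ≤ α*y^2 + β*y + ρ := by
  obtain ⟨y, h1, h2⟩ : ∃ y : ℝ, α*y = |β| + |ρ| + 1 + α ∧ (1:ℝ) ≤ y := by
    refine ⟨(|β| + |ρ| + 1)/α + 1, by field_simp, ?_⟩
    have : 0 ≤ (|β| + |ρ| + 1)/α := by positivity
    linarith
  exact ⟨y, by nlinarith [neg_abs_le β, neg_abs_le ρ, abs_nonneg β, abs_nonneg ρ]⟩

lemma keyA (A B C c1 c2 c5 : ℝ) (hA : A ≠ 0) :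
    (∀ r : ℝ, ∃ x y : ℝ, A*x^2 + B*x*y + C*y^2 + c1*x + c2*y + c5 = r) ∨
    (∃ m : ℝ, (∀ x y : ℝ, m ≤ A*x^2 + B*x*y + C*y^2 + c1*x + c2*y + c5) ∧
      ∀ r, m ≤ r → ∃ x y, A*x^2 + B*x*y + C*y^2 + c1*x + c2*y + c5 = r) ∨
    (∃ m : ℝ, (∀ x y : ℝ, A*x^2 + B*x*y + C*y^2 + c1*x + c2*y + c5 ≤ m) ∧
      ∀ r, r ≤ m → ∃ x y, A*x^2 + B*x*y + C*y^2 + c1*x + c2*y + c5 = r) := by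
  set D := 4*A*C - B^2 with hD
  rcases lt_trichotomy D 0 with hDlt | hDeq | hDgt
  · -- indefinite (or degenerate downward): range is all of ℝ
    left
    intro r
    obtain ⟨y, hy⟩ := exists_big (-D/(4*A^2)) ((B*c1 - 2*A*c2)/(2*A^2))
      ((4*A*r - 4*A*c5 + c1^2)/(4*A^2)) (div_pos (by linarith) (by positivity))
    have hid : (r - (C*y^2 + c2*y + c5 - (B*y+c1)^2/(4*A)))/A
        = (-D/(4*A^2))*y^2 + ((B*c1 - 2*A*c2)/(2*A^2))*y + (4*A*r - 4*A*c5 + c1^2)/(4*A^2) := by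
      rw [hD]; field_simp; ring
    obtain ⟨x, hx⟩ := hitQ A B C c1 c2 c5 r y hA (by rw [hid]; exact hy)
    exact ⟨x, y, hx⟩
  · -- D = 0 : parabola-like (perfect square) quadratic part
    have hB2 : B^2 = 4*A*C := by rw [hD] at hDeq; linarith
    set γ := (2*A*c2 - B*c1)/(2*A) with hγ
    set δ := (4*A*c5 - c1^2)/(4*A) with hδ
    have hRid : ∀ y : ℝ, C*y^2 + c2*y + c5 - (B*y+c1)^2/(4*A) = γ*y + δ := by
      intro y; rw [hγ, hδ]; field_simp; linear_combination (-2*y^2) * hB2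
    by_cases hγ0 : γ = 0
    · -- range is a ray with endpoint δ
      have hlin : 2*A*c2 = B*c1 := by
        have : (2*A*c2 - B*c1)/(2*A) = 0 := hγ0
        field_simp at this; linarith
      have hsq : ∀ x y : ℝ, 4*A*(A*x^2 + B*x*y + C*y^2 + c1*x + c2*y + c5 - δ)
          = (2*A*x + B*y + c1)^2 := by
        intro x y; rw [hδ]; field_simp
        linear_combination (-y^2) * hB2 + (2*y) * hlin
      rcases hA.lt_or_gt with hAneg | hApos
      · right; right
        refine ⟨δ, fun x y => ?_, fun r hr => ?_⟩
        · nlinarith [hsq x y, sq_nonneg (2*A*x + B*y + c1)]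
        · obtain ⟨x, hx⟩ := hitQ A B C c1 c2 c5 r 0 hA (by
            rw [hRid 0]
            have : r - (γ*0 + δ) ≤ 0 := by rw [hγ0]; linarith
            rw [div_nonneg_iff]; right; exact ⟨this, hAneg.le⟩)
          exact ⟨x, 0, hx⟩
      · right; left
        refine ⟨δ, fun x y => ?_, fun r hr => ?_⟩
        · nlinarith [hsq x y, sq_nonneg (2*A*x + B*y + c1)]
        · obtain ⟨x, hx⟩ := hitQ A B C c1 c2 c5 r 0 hA (by
            rw [hRid 0]
            have : 0 ≤ r - (γ*0 + δ) := by rw [hγ0]; linarith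
            positivity)
          exact ⟨x, 0, hx⟩
    · -- nonzero linear remainder: range is all of ℝ
      left
      intro r
      obtain ⟨x, hx⟩ := hitQ A B C c1 c2 c5 r ((r - δ)/γ) hA (by
        rw [hRid]
        have : γ * ((r - δ)/γ) + δ = r := by field_simp; ring
        rw [this]; simp)
      exact ⟨x, (r - δ)/γ, hx⟩
  · -- D > 0 : definite
    have hDne : D ≠ 0 := ne_of_gt hDgt
    set m := c5 + (B*c1*c2 - C*c1^2 - A*c2^2)/D with hm
    have hI : ∀ x y : ℝ, 4*A*D*(A*x^2 + B*x*y + C*y^2 + c1*x + c2*y + c5 - m)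
        = D*(2*A*x + B*y + c1)^2 + (D*y + 2*A*c2 - B*c1)^2 := by
      intro x y; rw [hm, hD]; field_simp [show (4*A*C - B^2 ≠ 0) from hDne]; ring
    set y0 := (B*c1 - 2*A*c2)/D with hy0
    have hRm : C*y0^2 + c2*y0 + c5 - (B*y0+c1)^2/(4*A) = m := by
      rw [hy0, hm]; field_simp; rw [hD]; ring
    rcases hA.lt_or_gt with hAneg | hApos
    · right; right
      refine ⟨m, fun x y => ?_, fun r hr => ?_⟩
      · have hsum : 0 ≤ D*(2*A*x + B*y + c1)^2 + (D*y + 2*A*c2 - B*c1)^2 := by positivity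
        nlinarith [hI x y, hsum, mul_pos (neg_pos.mpr hAneg) hDgt]
      · obtain ⟨x, hx⟩ := hitQ A B C c1 c2 c5 r y0 hA (by
          rw [hRm]
          rw [div_nonneg_iff]; right; exact ⟨by linarith, hAneg.le⟩)
        exact ⟨x, y0, hx⟩
    · right; left
      refine ⟨m, fun x y => ?_, fun r hr => ?_⟩
      · have hsum : 0 ≤ D*(2*A*x + B*y + c1)^2 + (D*y + 2*A*c2 - B*c1)^2 := by positivity
        nlinarith [hI x y, hsum, mul_pos hApos hDgt]
      · obtain ⟨x, hx⟩ := hitQ A B C c1 c2 c5 r y0 hA (by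
          rw [hRm]; exact div_nonneg (by linarith) hApos.le)
        exact ⟨x, y0, hx⟩

lemma quadRange (A B C c1 c2 c5 : ℝ) (hq : ¬(A = 0 ∧ B = 0 ∧ C = 0)) :
    (∀ r : ℝ, ∃ x y : ℝ, A*x^2 + B*x*y + C*y^2 + c1*x + c2*y + c5 = r) ∨
    (∃ m : ℝ, (∀ x y : ℝ, m ≤ A*x^2 + B*x*y + C*y^2 + c1*x + c2*y + c5) ∧
      ∀ r, m ≤ r → ∃ x y, A*x^2 + B*x*y + C*y^2 + c1*x + c2*y + c5 = r) ∨
    (∃ m : ℝ, (∀ x y : ℝ, A*x^2 + B*x*y + C*y^2 + c1*x + c2*y + c5 ≤ m) ∧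
      ∀ r, r ≤ m → ∃ x y, A*x^2 + B*x*y + C*y^2 + c1*x + c2*y + c5 = r) := by
  by_cases hA : A = 0
  · by_cases hC : C = 0
    · -- A = C = 0, so B ≠ 0
      have hB : B ≠ 0 := by
        intro hB; exact hq ⟨hA, hB, hC⟩
      left
      intro r
      refine ⟨(B*(r - c5) + c1*c2 - c2)/B, (1 - c1)/B, ?_⟩
      subst hA hC; field_simp; ring
    · rcases keyA C B A c2 c1 c5 hC with h | ⟨m, hb, hh⟩ | ⟨m, hb, hh⟩
      · left; intro r
        obtain ⟨x, y, h⟩ := h r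
        exact ⟨y, x, by linear_combination h⟩
      · right; left
        refine ⟨m, fun x y => by linarith [hb y x, sq_nonneg x, (by ring :
          C*y^2 + B*y*x + A*x^2 + c2*y + c1*x + c5
            = A*x^2 + B*x*y + C*y^2 + c1*x + c2*y + c5)], fun r hr => ?_⟩
        obtain ⟨x, y, h⟩ := hh r hr
        exact ⟨y, x, by linear_combination h⟩
      · right; right
        refine ⟨m, fun x y => by linarith [hb y x, (by ring :
          C*y^2 + B*y*x + A*x^2 + c2*y + c1*x + c5
            = A*x^2 + B*x*y + C*y^2 + c1*x + c2*y + c5)], fun r hr => ?_⟩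
        obtain ⟨x, y, h⟩ := hh r hr
        exact ⟨y, x, by linear_combination h⟩
  · exact keyA A B C c1 c2 c5 hA

noncomputable def lin2 (p q r s : ℝ) : (ℝ × ℝ) →ₗ[ℝ] (ℝ × ℝ) where
  toFun v := (p*v.1 + q*v.2, r*v.1 + s*v.2)
  map_add' u v := by simp [Prod.ext_iff]; constructor <;> ring
  map_smul' c v := by simp [Prod.ext_iff]; constructor <;> ring

noncomputable def aff2 (p q r s t u : ℝ) : (ℝ × ℝ) →ᵃ[ℝ] (ℝ × ℝ) where
  toFun v := (p*v.1 + q*v.2 + t, r*v.1 + s*v.2 + u)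
  linear := lin2 p q r s
  map_vadd' w v := by
    simp [lin2, Prod.ext_iff, Prod.fst_add, Prod.snd_add]
    constructor <;> ring

lemma aff2_apply (p q r s t u : ℝ) (v : ℝ × ℝ) :
    aff2 p q r s t u v = (p*v.1 + q*v.2 + t, r*v.1 + s*v.2 + u) := rfl

lemma aff2_bij (p q r s t u : ℝ) (h : p*s - q*r ≠ 0) :
    Function.Bijective (aff2 p q r s t u) := by
  rw [Function.bijective_iff_has_inverse]
  refine ⟨fun v => ((s*(v.1 - t) - q*(v.2 - u))/(p*s - q*r),
      (-r*(v.1 - t) + p*(v.2 - u))/(p*s - q*r)), fun v => ?_, fun v => ?_⟩ <;>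
  · simp only [aff2_apply, Prod.ext_iff]
    constructor <;> (generalize hk : p*s - q*r = k at *; field_simp; subst hk; ring)

lemma main2 (A B C c1 c2 c5 d1 d2 d5 : ℝ)
    (hABC : ¬(A = 0 ∧ B = 0 ∧ C = 0))
    (h2A : 2*A*d2 = B*d1) (hBd : B*d2 = 2*C*d1) (hc : c1*d2 = c2*d1)
    (G : ℝ × ℝ → ℝ × ℝ)
    (hG : G = fun p => (A*p.1^2 + B*p.1*p.2 + C*p.2^2 + c1*p.1 + c2*p.2 + c5,
                        d1*p.1 + d2*p.2 + d5)) :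
    ∃ L : (ℝ × ℝ) →ᵃ[ℝ] (ℝ × ℝ), Function.Bijective L ∧
      (L '' Set.range G = {q : ℝ × ℝ | q.2 = 0} ∨
       L '' Set.range G = {q : ℝ × ℝ | 0 ≤ q.1 ∧ q.2 = 0} ∨
       L '' Set.range G = {q : ℝ × ℝ | ∃ t : ℝ, q = (t, t^2)}) := by
  by_cases hd : d1 = 0 ∧ d2 = 0
  · obtain ⟨hd1, hd2⟩ := hd
    rcases quadRange A B C c1 c2 c5 hABC with hsur | ⟨m, hbd, hhit⟩ | ⟨m, hbd, hhit⟩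
    · -- range of q is ℝ : line
      refine ⟨aff2 1 0 0 1 0 (-d5), aff2_bij _ _ _ _ _ _ (by norm_num), Or.inl ?_⟩
      ext w
      simp only [Set.mem_image, Set.mem_range, exists_exists_eq_and, Set.mem_setOf_eq]
      constructor
      · rintro ⟨p, rfl⟩
        simp [aff2_apply, hG, hd1, hd2]
      · intro hw
        obtain ⟨x, y, hxy⟩ := hsur w.1
        refine ⟨(x, y), ?_⟩
        rw [hG]; simp only [aff2_apply]
        apply Prod.ext
        · simpa [hd1, hd2] using hxy
        · simp [hd1, hd2, hw]
    · -- range of q is [m, ∞) : ray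
      refine ⟨aff2 1 0 0 1 (-m) (-d5), aff2_bij _ _ _ _ _ _ (by norm_num), Or.inr (Or.inl ?_)⟩
      ext w
      simp only [Set.mem_image, Set.mem_range, exists_exists_eq_and, Set.mem_setOf_eq]
      constructor
      · rintro ⟨p, rfl⟩
        rw [hG]; simp only [aff2_apply]
        constructor
        · have := hbd p.1 p.2; simp; linarith
        · simp [hd1, hd2]
      · rintro ⟨hw1, hw2⟩
        obtain ⟨x, y, hxy⟩ := hhit (w.1 + m) (by linarith)
        refine ⟨(x, y), ?_⟩
        rw [hG]; simp only [aff2_apply]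
        apply Prod.ext
        · simp; linarith
        · simp [hd1, hd2, hw2]
    · -- range of q is (-∞, m] : flipped ray
      refine ⟨aff2 (-1) 0 0 1 m (-d5), aff2_bij _ _ _ _ _ _ (by norm_num), Or.inr (Or.inl ?_)⟩
      ext w
      simp only [Set.mem_image, Set.mem_range, exists_exists_eq_and, Set.mem_setOf_eq]
      constructor
      · rintro ⟨p, rfl⟩
        rw [hG]; simp only [aff2_apply]
        constructor
        · have := hbd p.1 p.2; simp; linarith
        · simp [hd1, hd2]
      · rintro ⟨hw1, hw2⟩
        obtain ⟨x, y, hxy⟩ := hhit (m - w.1) (by linarith)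
        refine ⟨(x, y), ?_⟩
        rw [hG]; simp only [aff2_apply]
        apply Prod.ext
        · simp; linarith
        · simp [hd1, hd2, hw2]
  · -- (d1, d2) ≠ 0 : parabola
    have hd' : d1 ≠ 0 ∨ d2 ≠ 0 := by tauto
    obtain ⟨e, f, hA, hB, hC, hc1, hc2⟩ :
        ∃ e f : ℝ, A = e*d1^2 ∧ B = 2*e*d1*d2 ∧ C = e*d2^2 ∧ c1 = f*d1 ∧ c2 = f*d2 := by
      rcases hd' with h1 | h2
      · refine ⟨A/d1^2, c1/d1, by field_simp, ?_, ?_, by field_simp, ?_⟩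
        · field_simp; linear_combination (-1) * h2A
        · field_simp; linear_combination (-d2/2) * h2A + (-d1/2) * hBd
        · field_simp; linear_combination (-1) * hc
      · refine ⟨C/d2^2, c2/d2, ?_, ?_, by field_simp, ?_, by field_simp⟩
        · field_simp; linear_combination (d2/2) * h2A + (d1/2) * hBd
        · field_simp; linear_combination hBd
        · field_simp; linear_combination hc
    have he : e ≠ 0 := by
      intro h
      exact hABC ⟨by rw [hA, h]; ring, by rw [hB, h]; ring, by rw [hC, h]; ring⟩
    have hGu : ∀ p : ℝ × ℝ, G p =
        (e*(d1*p.1 + d2*p.2)^2 + f*(d1*p.1 + d2*p.2) + c5, (d1*p.1 + d2*p.2) + d5) := by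
      intro p
      simp only [hG, hA, hB, hC, hc1, hc2]
      exact congrArg₂ Prod.mk (by ring) (by ring)
    set Lf := aff2 0 1 (1/e) (-f/e) (-d5) ((f*d5 - c5)/e) with hLf
    have hLG : ∀ p : ℝ × ℝ, Lf (G p) =
        ((d1*p.1 + d2*p.2), (d1*p.1 + d2*p.2)^2) := by
      intro p
      rw [hGu p, hLf]; simp only [aff2_apply]
      exact congrArg₂ Prod.mk (by ring) (by field_simp; ring)
    refine ⟨Lf, aff2_bij _ _ _ _ _ _ (by simpa using he), Or.inr (Or.inr ?_)⟩
    ext w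
    simp only [Set.mem_image, Set.mem_range, exists_exists_eq_and, Set.mem_setOf_eq]
    constructor
    · rintro ⟨p, rfl⟩
      exact ⟨d1*p.1 + d2*p.2, by rw [hLG p]⟩
    · rintro ⟨t, rfl⟩
      rcases hd' with h1 | h2
      · refine ⟨(t/d1, 0), ?_⟩
        rw [hLG]
        have h : d1*(t/d1) + d2*(0:ℝ) = t := by field_simp; ring
        rw [h]
      · refine ⟨(0, t/d2), ?_⟩
        rw [hLG]
        have h : d1*(0:ℝ) + d2*(t/d2) = t := by field_simp; ring
        rw [h]

/-- if a quadratic map `F` of the plane (with not all quadratic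
coefficients zero) has identically vanishing Jacobian determinant (so `J₀ = ℝ²`),
then there is a bijective affine map `L` of the plane taking the range `F(ℝ²)`
exactly onto one of the three model sets: the line `ℝ × {0}`, the ray
`[0,∞) × {0}`, or the parabola `{(t, t²) : t ∈ ℝ}`. -/
theorem stmt15 (a0 a1 a2 a3 a4 a5 b0 b1 b2 b3 b4 b5 : ℝ)
    (hquad : ¬(a0 = 0 ∧ a1 = 0 ∧ a2 = 0 ∧ b0 = 0 ∧ b1 = 0 ∧ b2 = 0))
    (F : ℝ × ℝ → ℝ × ℝ)
    (hF : F = fun p =>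
      (a0*p.1^2 + a1*p.1*p.2 + a2*p.2^2 + a3*p.1 + a4*p.2 + a5,
       b0*p.1^2 + b1*p.1*p.2 + b2*p.2^2 + b3*p.1 + b4*p.2 + b5))
    (hdet : ∀ x y : ℝ,
      (2*a0*x + a1*y + a3) * (b1*x + 2*b2*y + b4)
        - (a1*x + 2*a2*y + a4) * (2*b0*x + b1*y + b3) = 0) :
    ∃ L : (ℝ × ℝ) →ᵃ[ℝ] (ℝ × ℝ), Function.Bijective L ∧
      (L '' Set.range F = {q : ℝ × ℝ | q.2 = 0} ∨
       L '' Set.range F = {q : ℝ × ℝ | 0 ≤ q.1 ∧ q.2 = 0} ∨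
       L '' Set.range F = {q : ℝ × ℝ | ∃ t : ℝ, q = (t, t^2)}) := by
  -- vanishing of the 2x2 minors of the quadratic coefficient matrix
  have m01 : a0*b1 = a1*b0 := by
    linear_combination (hdet 1 0)/4 + (hdet (-1) 0)/4 - (hdet 0 0)/2
  have m02 : a0*b2 = a2*b0 := by
    linear_combination (hdet 1 1 + hdet (-1) (-1) - hdet 1 (-1) - hdet (-1) 1)/16
  have m12 : a1*b2 = a2*b1 := by
    linear_combination (hdet 0 1)/4 + (hdet 0 (-1))/4 - (hdet 0 0)/2
  -- choose a direction (l, mu) killing the quadratic part of the second component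
  obtain ⟨l, mu, hlm, h0, h1, h2⟩ : ∃ l mu : ℝ, ¬(l = 0 ∧ mu = 0) ∧
      l*b0 = mu*a0 ∧ l*b1 = mu*a1 ∧ l*b2 = mu*a2 := by
    by_cases ha0 : a0 = 0
    · by_cases ha1 : a1 = 0
      · by_cases ha2 : a2 = 0
        · exact ⟨0, 1, fun h => one_ne_zero h.2,
            by rw [ha0]; ring, by rw [ha1]; ring, by rw [ha2]; ring⟩
        · exact ⟨a2, b2, fun h => ha2 h.1, by linear_combination -m02,
            by linear_combination -m12, by ring⟩
      · exact ⟨a1, b1, fun h => ha1 h.1, by linear_combination -m01, by ring,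
          by linear_combination m12⟩
    · exact ⟨a0, b0, fun h => ha0 h.1, by ring, by linear_combination m01,
        by linear_combination m02⟩
  have hNpos : 0 < l^2 + mu^2 := by
    rcases not_and_or.mp hlm with h | h
    · have h' : 0 < l^2 := lt_of_le_of_ne (sq_nonneg l) (Ne.symm (pow_ne_zero 2 h))
      nlinarith [sq_nonneg mu]
    · have h' : 0 < mu^2 := lt_of_le_of_ne (sq_nonneg mu) (Ne.symm (pow_ne_zero 2 h))
      nlinarith [sq_nonneg l]
  have hz : ∀ u : ℝ, u * (l^2 + mu^2) = 0 → u = 0 := by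
    intro u hu
    rcases mul_eq_zero.mp hu with h | h
    · exact h
    · exact absurd h (ne_of_gt hNpos)
  have hABC : ¬(l*a0 + mu*b0 = 0 ∧ l*a1 + mu*b1 = 0 ∧ l*a2 + mu*b2 = 0) := by
    rintro ⟨hA0, hB0, hC0⟩
    exact hquad ⟨hz a0 (by linear_combination l*hA0 - mu*h0),
      hz a1 (by linear_combination l*hB0 - mu*h1),
      hz a2 (by linear_combination l*hC0 - mu*h2),
      hz b0 (by linear_combination mu*hA0 + l*h0),
      hz b1 (by linear_combination mu*hB0 + l*h1),
      hz b2 (by linear_combination mu*hC0 + l*h2)⟩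
  -- the vanishing Jacobian determinant of the transformed map
  have hGlin : ∀ x y : ℝ,
      (2*(l*a0+mu*b0)*x + (l*a1+mu*b1)*y + (l*a3+mu*b3))*(l*b4-mu*a4)
        - ((l*a1+mu*b1)*x + 2*(l*a2+mu*b2)*y + (l*a4+mu*b4))*(l*b3-mu*a3) = 0 := by
    intro x y
    linear_combination (l^2+mu^2) * (hdet x y)
      - (l*(2*a0*x + a1*y + a3) + mu*(2*b0*x + b1*y + b3)) * (x*h1 + 2*y*h2)
      + (l*(a1*x + 2*a2*y + a4) + mu*(b1*x + 2*b2*y + b4)) * (2*x*h0 + y*h1)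
  have hcc : (l*a3+mu*b3)*(l*b4-mu*a4) = (l*a4+mu*b4)*(l*b3-mu*a3) := by
    linear_combination hGlin 0 0
  have h2A : 2*(l*a0+mu*b0)*(l*b4-mu*a4) = (l*a1+mu*b1)*(l*b3-mu*a3) := by
    linear_combination hGlin 1 0 - hGlin 0 0
  have hBd : (l*a1+mu*b1)*(l*b4-mu*a4) = 2*(l*a2+mu*b2)*(l*b3-mu*a3) := by
    linear_combination hGlin 0 1 - hGlin 0 0
  obtain ⟨L1, hL1bij, hL1⟩ := main2 (l*a0+mu*b0) (l*a1+mu*b1) (l*a2+mu*b2)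
    (l*a3+mu*b3) (l*a4+mu*b4) (l*a5+mu*b5) (l*b3-mu*a3) (l*b4-mu*a4) (l*b5-mu*a5)
    hABC h2A hBd hcc _ rfl
  have hMbij : Function.Bijective (aff2 l mu (-mu) l 0 0) :=
    aff2_bij l mu (-mu) l 0 0 (by intro h; nlinarith)
  have hcomp : (⇑(aff2 l mu (-mu) l 0 0)) ∘ F = (fun p : ℝ × ℝ =>
      ((l*a0+mu*b0)*p.1^2 + (l*a1+mu*b1)*p.1*p.2 + (l*a2+mu*b2)*p.2^2
        + (l*a3+mu*b3)*p.1 + (l*a4+mu*b4)*p.2 + (l*a5+mu*b5),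
       (l*b3-mu*a3)*p.1 + (l*b4-mu*a4)*p.2 + (l*b5-mu*a5))) := by
    funext p
    simp only [Function.comp_apply, hF, aff2_apply]
    exact congrArg₂ Prod.mk (by ring)
      (by linear_combination p.1^2*h0 + p.1*p.2*h1 + p.2^2*h2)
  refine ⟨L1.comp (aff2 l mu (-mu) l 0 0), ?_, ?_⟩
  · rw [AffineMap.coe_comp]
    exact hL1bij.comp hMbij
  · have himg : (L1.comp (aff2 l mu (-mu) l 0 0)) '' Set.range F
        = L1 '' Set.range (fun p : ℝ × ℝ =>
      ((l*a0+mu*b0)*p.1^2 + (l*a1+mu*b1)*p.1*p.2 + (l*a2+mu*b2)*p.2^2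
        + (l*a3+mu*b3)*p.1 + (l*a4+mu*b4)*p.2 + (l*a5+mu*b5),
       (l*b3-mu*a3)*p.1 + (l*b4-mu*a4)*p.2 + (l*b5-mu*a5))) := by
      rw [AffineMap.coe_comp, Set.image_comp, ← Set.range_comp, hcomp]
    rw [himg]
    exact hL1
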